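/- Every Preference-based Argumentation Framework (PAF) is an instance of ABA⁺: for the ABA⁺ framework corresponding to a PAF (Args, ⇝, ≼), the defeat relation of the repaired framework corresponds exactly to the <-attack relation on singletons, i.e. A defeats B in the PAF iff {A} <-attacks {B} in the corresponding ABA⁺ framework; consequently, E ⊆ Args is a σ extension of the PAF iff E is a <-σ extension of the corresponding ABA⁺ framework, for σ among grounded, ideal, stable, preferred, complete semantics. -/

import Mathlib

universe u

/-- An ABA framework: a deductive system `(ℒ, R)`, a nonempty set of assumptions,
and a total contrary map on assumptions (modelled as a total map on `ℒ`). -/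
structure ABAF (L : Type u) where
  rules : Set (L × List L)
  asms : Set L
  asms_nonempty : asms.Nonempty
  contrary : L → L

namespace ABAF

variable {L : Type u}

/-- There is a deduction for `φ` supported by `S` (and rules of `F`):
a finite tree with root `φ`, leaves labelled by `⊤` or elements of `S`,
children of non-leaf nodes given by bodies of rules with matching heads. -/
inductive Ded (F : ABAF L) (S : Set L) : L → Prop
  | assumption {φ : L} : φ ∈ S → Ded F S φ
  | rule {φ : L} {body : List L} : (φ, body) ∈ F.rules →
      (∀ ψ ∈ body, Ded F S ψ) → Ded F S φ

/-- The conclusions of `E`: all sentences deducible from subsets of `E`. -/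
def cn (F : ABAF L) (E : Set L) : Set L := {φ | F.Ded E φ}

/-- The closure of `E`: all assumptions deducible from `E`. -/
def cl (F : ABAF L) (E : Set L) : Set L := F.cn E ∩ F.asms

/-- `E` is closed iff it coincides with its closure. -/
def Closed (F : ABAF L) (E : Set L) : Prop := F.cl E = E

/-- `A` attacks `B` iff some `A' ⊆ A` supports a deduction of the contrary of some `β ∈ B`. -/
def Attacks (F : ABAF L) (A B : Set L) : Prop :=
  ∃ A' ⊆ A, ∃ β ∈ B, F.Ded A' (F.contrary β)

/-- A framework is flat iff every set of assumptions is closed. -/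
def Flat (F : ABAF L) : Prop := ∀ E ⊆ F.asms, F.Closed E

def ConflictFree (F : ABAF L) (E : Set L) : Prop := ¬ F.Attacks E E

def Defends (F : ABAF L) (E A : Set L) : Prop :=
  ∀ B ⊆ F.asms, F.Closed B → F.Attacks B A → F.Attacks E B

def Admissible (F : ABAF L) (E : Set L) : Prop :=
  E ⊆ F.asms ∧ F.Closed E ∧ F.ConflictFree E ∧ F.Defends E E

def Preferred (F : ABAF L) (E : Set L) : Prop :=
  F.Admissible E ∧ ∀ E', F.Admissible E' → E ⊆ E' → E' = E

def Complete (F : ABAF L) (E : Set L) : Prop :=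
  F.Admissible E ∧ ∀ A ⊆ F.asms, F.Defends E A → A ⊆ E

def Stable (F : ABAF L) (E : Set L) : Prop :=
  E ⊆ F.asms ∧ F.Closed E ∧ F.ConflictFree E ∧
    ∀ β ∈ F.asms, β ∉ E → F.Attacks E {β}

def WellFounded (F : ABAF L) (E : Set L) : Prop :=
  E = ⋂₀ {E' | F.Complete E'}

def Ideal (F : ABAF L) (E : Set L) : Prop :=
  (F.Admissible E ∧ ∀ P, F.Preferred P → E ⊆ P) ∧
    ∀ E', (F.Admissible E' ∧ ∀ P, F.Preferred P → E' ⊆ P) → E ⊆ E' → E' = E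

end ABAF

/-- An ABA⁺ framework: an ABA framework with a transitive preference relation on assumptions. -/
structure ABAPlus (L : Type u) extends ABAF L where
  le : L → L → Prop
  le_trans : ∀ a b c, le a b → le b c → le a c

namespace ABAPlus

variable {L : Type u}

/-- The strict counterpart of the preference relation. -/
def lt (F : ABAPlus L) (a b : L) : Prop := F.le a b ∧ ¬ F.le b a

/-- `A` <-attacks `B`: either a normal attack (a deduction from `A' ⊆ A` of the contrary of
some `β ∈ B` with no supporting assumption strictly less preferred than `β`),
or a reverse attack (a deduction from `B' ⊆ B` of the contrary of some `α ∈ A` using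
some assumption strictly less preferred than `α`). -/
def LtAttacks (F : ABAPlus L) (A B : Set L) : Prop :=
  (∃ A' ⊆ A, ∃ β ∈ B, F.toABAF.Ded A' (F.contrary β) ∧ ∀ α' ∈ A', ¬ F.lt α' β) ∨
  (∃ B' ⊆ B, ∃ α ∈ A, F.toABAF.Ded B' (F.contrary α) ∧ ∃ β' ∈ B', F.lt β' α)

def LtConflictFree (F : ABAPlus L) (E : Set L) : Prop := ¬ F.LtAttacks E E

def LtDefends (F : ABAPlus L) (E A : Set L) : Prop :=
  ∀ B ⊆ F.asms, F.toABAF.Closed B → F.LtAttacks B A → F.LtAttacks E B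

def LtAdmissible (F : ABAPlus L) (E : Set L) : Prop :=
  E ⊆ F.asms ∧ F.toABAF.Closed E ∧ F.LtConflictFree E ∧ F.LtDefends E E

def LtPreferred (F : ABAPlus L) (E : Set L) : Prop :=
  F.LtAdmissible E ∧ ∀ E', F.LtAdmissible E' → E ⊆ E' → E' = E

def LtComplete (F : ABAPlus L) (E : Set L) : Prop :=
  F.LtAdmissible E ∧ ∀ A ⊆ F.asms, F.LtDefends E A → A ⊆ E

def LtStable (F : ABAPlus L) (E : Set L) : Prop :=
  E ⊆ F.asms ∧ F.toABAF.Closed E ∧ F.LtConflictFree E ∧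
    ∀ β ∈ F.asms, β ∉ E → F.LtAttacks E {β}

def LtWellFounded (F : ABAPlus L) (E : Set L) : Prop :=
  E = ⋂₀ {E' | F.LtComplete E'}

def LtIdeal (F : ABAPlus L) (E : Set L) : Prop :=
  (F.LtAdmissible E ∧ ∀ P, F.LtPreferred P → E ⊆ P) ∧
    ∀ E', (F.LtAdmissible E' ∧ ∀ P, F.LtPreferred P → E' ⊆ P) → E ⊆ E' → E' = E

/-- The Axiom of Weak Contraposition. -/
def WCP (F : ABAPlus L) : Prop :=
  ∀ A ⊆ F.asms, ∀ β ∈ F.asms,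
    F.toABAF.Ded A (F.contrary β) → (∃ α' ∈ A, F.lt α' β) →
    ∃ α ∈ A, F.lt α β ∧ (∀ α'' ∈ A, F.lt α'' β → ¬ F.lt α'' α) ∧
      ∃ Aα ⊆ (A \ {α}) ∪ {β}, F.toABAF.Ded Aα (F.contrary α)

end ABAPlus

/-- A Preference-based Argumentation Framework: an abstract argumentation framework
with a preorder over arguments. -/
structure PAF (Arg : Type u) where
  att : Arg → Arg → Prop
  pre : Arg → Arg → Prop
  pre_refl : ∀ a, pre a a
  pre_trans : ∀ a b c, pre a b → pre b c → pre a c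

namespace PAF

variable {Arg : Type u}

def plt (P : PAF Arg) (a b : Arg) : Prop := P.pre a b ∧ ¬ P.pre b a

/-- Defeat in the repaired framework: attacks from non-less-preferred arguments,
and reversed attacks from strictly less preferred arguments. -/
def Defeat (P : PAF Arg) (a b : Arg) : Prop :=
  (P.att a b ∧ ¬ P.plt a b) ∨ (P.att b a ∧ P.plt b a)

def CF (P : PAF Arg) (E : Set Arg) : Prop := ¬ ∃ a ∈ E, ∃ b ∈ E, P.Defeat a b

def DefendsArg (P : PAF Arg) (E : Set Arg) (a : Arg) : Prop :=
  ∀ b, P.Defeat b a → ∃ c ∈ E, P.Defeat c b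

def Admissible (P : PAF Arg) (E : Set Arg) : Prop :=
  P.CF E ∧ ∀ a ∈ E, P.DefendsArg E a

def Preferred (P : PAF Arg) (E : Set Arg) : Prop :=
  P.Admissible E ∧ ∀ E', P.Admissible E' → E ⊆ E' → E' = E

def Complete (P : PAF Arg) (E : Set Arg) : Prop :=
  P.Admissible E ∧ ∀ a, P.DefendsArg E a → a ∈ E

def Stable (P : PAF Arg) (E : Set Arg) : Prop :=
  P.CF E ∧ ∀ b, b ∉ E → ∃ a ∈ E, P.Defeat a b

def Grounded (P : PAF Arg) (E : Set Arg) : Prop :=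
  E = ⋂₀ {E' | P.Complete E'}

def Ideal (P : PAF Arg) (E : Set Arg) : Prop :=
  (P.Admissible E ∧ ∀ Q, P.Preferred Q → E ⊆ Q) ∧
    ∀ E', (P.Admissible E' ∧ ∀ Q, P.Preferred Q → E' ⊆ Q) → E ⊆ E' → E' = E

/-- The ABA⁺ framework corresponding to a PAF: arguments become assumptions (`Sum.inl`),
with fresh contraries (`Sum.inr`), each attack `A ⇝ B` becomes a rule `B̄ ← A`, and the
preference ordering is transferred as is. -/
def toABAPlus [Nonempty Arg] (P : PAF Arg) : ABAPlus (Arg ⊕ Arg) where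
  rules := {r | ∃ a b, P.att a b ∧ r = (Sum.inr b, [Sum.inl a])}
  asms := Set.range Sum.inl
  asms_nonempty := ⟨Sum.inl (Classical.arbitrary Arg), Set.mem_range_self _⟩
  contrary := fun x => Sum.elim Sum.inr Sum.inl x
  le := fun x y => ∃ a b, x = Sum.inl a ∧ y = Sum.inl b ∧ P.pre a b
  le_trans := by
    rintro x y z ⟨a, b, rfl, rfl, h1⟩ ⟨b', c, hb, rfl, h2⟩
    injection hb with hb
    subst hb
    exact ⟨a, c, rfl, rfl, P.pre_trans _ _ _ h1 h2⟩

end PAF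

namespace PAF

section Aux

set_option linter.unusedSectionVars false

variable {Arg : Type u} [Nonempty Arg] (P : PAF Arg)

lemma ded_inl {S : Set (Arg ⊕ Arg)} {a : Arg}
    (h : P.toABAPlus.toABAF.Ded S (Sum.inl a)) : Sum.inl a ∈ S := by
  cases h with
  | assumption h => exact h
  | rule hr _ =>
    obtain ⟨x, y, _, heq⟩ := hr
    simp only [Prod.mk.injEq] at heq
    exact absurd heq.1 (by simp)

lemma ded_inr {S : Set (Arg ⊕ Arg)} {b : Arg} :
    P.toABAPlus.toABAF.Ded S (Sum.inr b) ↔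
      Sum.inr b ∈ S ∨ ∃ a, P.att a b ∧ Sum.inl a ∈ S := by
  constructor
  · intro h
    cases h with
    | assumption h => exact Or.inl h
    | rule hr hb =>
      obtain ⟨x, y, hxy, heq⟩ := hr
      simp only [Prod.mk.injEq] at heq
      obtain ⟨h1, h2⟩ := heq
      injection h1 with h1
      subst h1
      refine Or.inr ⟨x, hxy, ?_⟩
      have := hb (Sum.inl x) (by rw [h2]; simp)
      exact P.ded_inl this
  · rintro (h | ⟨a, hatt, ha⟩)
    · exact ABAF.Ded.assumption h
    · refine ABAF.Ded.rule (φ := Sum.inr b) (body := [Sum.inl a]) ⟨a, b, hatt, rfl⟩ ?_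
      intro ψ hψ
      simp only [List.mem_singleton] at hψ
      subst hψ
      exact ABAF.Ded.assumption ha

lemma le_inl {a b : Arg} : P.toABAPlus.le (Sum.inl a) (Sum.inl b) ↔ P.pre a b := by
  constructor
  · rintro ⟨x, y, hx, hy, h⟩
    injection hx with hx; injection hy with hy
    subst hx; subst hy; exact h
  · intro h; exact ⟨a, b, rfl, rfl, h⟩

lemma lt_inl {a b : Arg} : P.toABAPlus.lt (Sum.inl a) (Sum.inl b) ↔ P.plt a b := by
  unfold ABAPlus.lt PAF.plt
  rw [P.le_inl, P.le_inl]

lemma contrary_inl (b : Arg) : P.toABAPlus.contrary (Sum.inl b) = Sum.inr b := rfl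

lemma closed_of_subset_asms {E : Set (Arg ⊕ Arg)} (hE : E ⊆ P.toABAPlus.asms) :
    P.toABAPlus.toABAF.Closed E := by
  unfold ABAF.Closed ABAF.cl ABAF.cn
  ext φ
  constructor
  · rintro ⟨hded, hasm⟩
    obtain ⟨a, rfl⟩ := hasm
    exact P.ded_inl hded
  · intro h
    exact ⟨ABAF.Ded.assumption h, hE h⟩

lemma image_subset_asms (E : Set Arg) : Sum.inl '' E ⊆ P.toABAPlus.asms :=
  Set.image_subset_range _ _

lemma ltAttacks_image_iff (Y X : Set Arg) :
    P.toABAPlus.LtAttacks (Sum.inl '' Y) (Sum.inl '' X) ↔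
      (∃ a ∈ Y, ∃ b ∈ X, P.att a b ∧ ¬ P.plt a b) ∨
      (∃ a ∈ Y, (∃ c ∈ X, P.att c a) ∧ ∃ d ∈ X, P.plt d a) := by
  constructor
  · rintro (⟨A', hA', β, hβ, hded, hmin⟩ | ⟨B', hB', α, hα, hded, β', hβ', hlt⟩)
    · obtain ⟨b, hb, rfl⟩ := hβ
      rw [P.contrary_inl, P.ded_inr] at hded
      rcases hded with h | ⟨a, hatt, haA⟩
      · obtain ⟨_, _, h⟩ := hA' h; exact absurd h (by simp)
      · obtain ⟨a', ha'Y, ha'⟩ := hA' haA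
        injection ha' with ha'
        refine Or.inl ⟨a, ha' ▸ ha'Y, b, hb, hatt, ?_⟩
        intro hplt
        exact hmin (Sum.inl a) haA ((P.lt_inl).mpr hplt)
    · obtain ⟨a, ha, rfl⟩ := hα
      rw [P.contrary_inl, P.ded_inr] at hded
      rcases hded with h | ⟨c, hatt, hcB⟩
      · obtain ⟨_, _, h⟩ := hB' h; exact absurd h (by simp)
      · obtain ⟨c', hc'X, hc'⟩ := hB' hcB
        injection hc' with hc'
        obtain ⟨d, hdX, hd⟩ := hB' hβ'
        subst hd
        exact Or.inr ⟨a, ha, ⟨c, hc' ▸ hc'X, hatt⟩, d, hdX, (P.lt_inl).mp hlt⟩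
  · rintro (⟨a, ha, b, hb, hatt, hnplt⟩ | ⟨a, ha, ⟨c, hc, hatt⟩, d, hd, hplt⟩)
    · refine Or.inl ⟨{Sum.inl a}, Set.singleton_subset_iff.2 (Set.mem_image_of_mem _ ha),
        Sum.inl b, Set.mem_image_of_mem _ hb, ?_, ?_⟩
      · rw [P.contrary_inl, P.ded_inr]
        exact Or.inr ⟨a, hatt, rfl⟩
      · intro α' hα'
        simp only [Set.mem_singleton_iff] at hα'
        subst hα'
        rw [P.lt_inl]
        exact hnplt
    · refine Or.inr ⟨{Sum.inl c, Sum.inl d}, ?_, Sum.inl a, Set.mem_image_of_mem _ ha,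
        ?_, Sum.inl d, by simp, (P.lt_inl).mpr hplt⟩
      · rintro x (rfl | rfl)
        · exact Set.mem_image_of_mem _ hc
        · exact Set.mem_image_of_mem _ hd
      · rw [P.contrary_inl, P.ded_inr]
        exact Or.inr ⟨c, hatt, by simp⟩

lemma defeat_iff_ltAttacks (a b : Arg) :
    P.Defeat a b ↔ P.toABAPlus.LtAttacks {Sum.inl a} {Sum.inl b} := by
  rw [← Set.image_singleton, ← Set.image_singleton, P.ltAttacks_image_iff]
  simp only [Set.mem_singleton_iff, exists_eq_left]
  unfold PAF.Defeat
  tauto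

lemma ltAttacks_image_singleton_iff (E : Set Arg) (b : Arg) :
    P.toABAPlus.LtAttacks (Sum.inl '' E) {Sum.inl b} ↔ ∃ e ∈ E, P.Defeat e b := by
  have h0 : ({Sum.inl b} : Set (Arg ⊕ Arg)) = Sum.inl '' {b} := by simp
  rw [h0, P.ltAttacks_image_iff]
  simp only [Set.mem_singleton_iff, exists_eq_left]
  unfold PAF.Defeat
  constructor
  · rintro (⟨a, ha, h⟩ | ⟨a, ha, h⟩)
    · exact ⟨a, ha, Or.inl h⟩
    · exact ⟨a, ha, Or.inr h⟩
  · rintro ⟨e, he, h | h⟩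
    · exact Or.inl ⟨e, he, h⟩
    · exact Or.inr ⟨e, he, h⟩

lemma ltAttacks_mono {A A' B B' : Set (Arg ⊕ Arg)} (hA : A ⊆ A') (hB : B ⊆ B')
    (h : P.toABAPlus.LtAttacks A B) : P.toABAPlus.LtAttacks A' B' := by
  rcases h with ⟨S, hS, β, hβ, hd⟩ | ⟨S, hS, α, hα, hd⟩
  · exact Or.inl ⟨S, hS.trans hA, β, hB hβ, hd⟩
  · exact Or.inr ⟨S, hS.trans hB, α, hA hα, hd⟩

lemma ltDefends_anti {E A A' : Set (Arg ⊕ Arg)} (h : P.toABAPlus.LtDefends E A)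
    (hAA : A' ⊆ A) : P.toABAPlus.LtDefends E A' := by
  intro B hB hcl hatt
  exact h B hB hcl (P.ltAttacks_mono (le_refl _) hAA hatt)

lemma exists_defeat_iff (E : Set Arg) :
    (∃ a ∈ E, ∃ b ∈ E, P.Defeat a b) ↔
      P.toABAPlus.LtAttacks (Sum.inl '' E) (Sum.inl '' E) := by
  rw [P.ltAttacks_image_iff]
  constructor
  · rintro ⟨a, ha, b, hb, hdef | hdef⟩
    · exact Or.inl ⟨a, ha, b, hb, hdef⟩
    · exact Or.inr ⟨a, ha, ⟨b, hb, hdef.1⟩, b, hb, hdef.2⟩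
  · rintro (⟨a, ha, b, hb, h1, h2⟩ | ⟨a, ha, ⟨c, hc, hatt⟩, d, hd, hplt⟩)
    · exact ⟨a, ha, b, hb, Or.inl ⟨h1, h2⟩⟩
    · by_cases h : P.plt c a
      · exact ⟨a, ha, c, hc, Or.inr ⟨hatt, h⟩⟩
      · exact ⟨c, hc, a, ha, Or.inl ⟨hatt, h⟩⟩

lemma cf_iff (E : Set Arg) : P.CF E ↔ P.toABAPlus.LtConflictFree (Sum.inl '' E) := by
  unfold PAF.CF ABAPlus.LtConflictFree
  rw [P.exists_defeat_iff]

lemma defendsArg_mono {E E' : Set Arg} (h : E ⊆ E') {a : Arg}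
    (hd : P.DefendsArg E a) : P.DefendsArg E' a := by
  intro b hb
  obtain ⟨c, hc, hdef⟩ := hd b hb
  exact ⟨c, h hc, hdef⟩

lemma defends_iff (E : Set Arg) :
    (∀ a ∈ E, P.DefendsArg E a) ↔
      P.toABAPlus.LtDefends (Sum.inl '' E) (Sum.inl '' E) := by
  constructor
  · intro h B hB hcl hatt
    have hBY : Sum.inl '' (Sum.inl ⁻¹' B) = B := Set.image_preimage_eq_of_subset hB
    rw [← hBY] at hatt ⊢
    set Y := Sum.inl ⁻¹' B with hY
    rcases (P.ltAttacks_image_iff Y E).mp hatt with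
      ⟨a, ha, b, hb, hatt', hnplt⟩ | ⟨a, ha, ⟨c, hc, hatt'⟩, d, hd, hplt⟩
    · obtain ⟨e, he, hdef⟩ := h b hb a (Or.inl ⟨hatt', hnplt⟩)
      exact P.ltAttacks_mono (le_refl _)
        (Set.singleton_subset_iff.2 (Set.mem_image_of_mem _ ha))
        ((P.ltAttacks_image_singleton_iff E a).mpr ⟨e, he, hdef⟩)
    · by_cases hca : P.plt c a
      · obtain ⟨e, he, hdef⟩ := h c hc a (Or.inr ⟨hatt', hca⟩)
        exact P.ltAttacks_mono (le_refl _)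
          (Set.singleton_subset_iff.2 (Set.mem_image_of_mem _ ha))
          ((P.ltAttacks_image_singleton_iff E a).mpr ⟨e, he, hdef⟩)
      · exact (P.ltAttacks_image_iff E Y).mpr (Or.inl ⟨c, hc, a, ha, hatt', hca⟩)
  · intro h a ha b hdef
    have h1 : P.toABAPlus.LtAttacks {Sum.inl b} (Sum.inl '' E) :=
      P.ltAttacks_mono (le_refl _)
        (Set.singleton_subset_iff.2 (Set.mem_image_of_mem _ ha))
        ((P.defeat_iff_ltAttacks b a).mp hdef)
    have h2 := h {Sum.inl b} (Set.singleton_subset_iff.2 ⟨b, rfl⟩)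
      (P.closed_of_subset_asms (Set.singleton_subset_iff.2 ⟨b, rfl⟩)) h1
    exact (P.ltAttacks_image_singleton_iff E b).mp h2

lemma ltDefends_singleton_iff (E : Set Arg) (a : Arg) :
    P.DefendsArg E a ↔ P.toABAPlus.LtDefends (Sum.inl '' E) {Sum.inl a} := by
  constructor
  · intro h B hB hcl hatt
    have hBY : Sum.inl '' (Sum.inl ⁻¹' B) = B := Set.image_preimage_eq_of_subset hB
    rw [← hBY] at hatt ⊢
    set Y := Sum.inl ⁻¹' B with hYdef
    have hY : ∃ y ∈ Y, P.Defeat y a := (P.ltAttacks_image_singleton_iff Y a).mp hatt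
    obtain ⟨y, hy, hdef⟩ := hY
    obtain ⟨e, he, hdef'⟩ := h y hdef
    exact P.ltAttacks_mono (le_refl _)
      (Set.singleton_subset_iff.2 (Set.mem_image_of_mem _ hy))
      ((P.ltAttacks_image_singleton_iff E y).mpr ⟨e, he, hdef'⟩)
  · intro h b hdef
    have h1 : P.toABAPlus.LtAttacks {Sum.inl b} {Sum.inl a} :=
      (P.defeat_iff_ltAttacks b a).mp hdef
    have h2 := h {Sum.inl b} (Set.singleton_subset_iff.2 ⟨b, rfl⟩)
      (P.closed_of_subset_asms (Set.singleton_subset_iff.2 ⟨b, rfl⟩)) h1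
    exact (P.ltAttacks_image_singleton_iff E b).mp h2

lemma admissible_iff (E : Set Arg) :
    P.Admissible E ↔ P.toABAPlus.LtAdmissible (Sum.inl '' E) := by
  constructor
  · rintro ⟨hcf, hdef⟩
    exact ⟨P.image_subset_asms E, P.closed_of_subset_asms (P.image_subset_asms E),
      (P.cf_iff E).mp hcf, (P.defends_iff E).mp hdef⟩
  · rintro ⟨_, _, hcf, hdef⟩
    exact ⟨(P.cf_iff E).mpr hcf, (P.defends_iff E).mpr hdef⟩

lemma complete_iff (E : Set Arg) :
    P.Complete E ↔ P.toABAPlus.LtComplete (Sum.inl '' E) := by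
  constructor
  · rintro ⟨hadm, hcomp⟩
    refine ⟨(P.admissible_iff E).mp hadm, ?_⟩
    intro A hA hdef
    intro x hx
    obtain ⟨a, rfl⟩ := hA hx
    have : P.DefendsArg E a := (P.ltDefends_singleton_iff E a).mpr
      (P.ltDefends_anti hdef (Set.singleton_subset_iff.2 hx))
    exact Set.mem_image_of_mem _ (hcomp a this)
  · rintro ⟨hadm, hcomp⟩
    refine ⟨(P.admissible_iff E).mpr hadm, ?_⟩
    intro a hdef
    have h1 : P.toABAPlus.LtDefends (Sum.inl '' E) {Sum.inl a} :=
      (P.ltDefends_singleton_iff E a).mp hdef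
    have h2 := hcomp {Sum.inl a} (Set.singleton_subset_iff.2 ⟨a, rfl⟩) h1
    obtain ⟨a', ha', heq⟩ := h2 rfl
    injection heq with heq
    subst heq
    exact ha'

lemma stable_iff (E : Set Arg) :
    P.Stable E ↔ P.toABAPlus.LtStable (Sum.inl '' E) := by
  constructor
  · rintro ⟨hcf, hst⟩
    refine ⟨P.image_subset_asms E, P.closed_of_subset_asms (P.image_subset_asms E),
      (P.cf_iff E).mp hcf, ?_⟩
    rintro β ⟨b, rfl⟩ hb
    have hbE : b ∉ E := fun h => hb (Set.mem_image_of_mem _ h)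
    exact (P.ltAttacks_image_singleton_iff E b).mpr (hst b hbE)
  · rintro ⟨_, _, hcf, hst⟩
    refine ⟨(P.cf_iff E).mpr hcf, ?_⟩
    intro b hb
    have : (Sum.inl b : Arg ⊕ Arg) ∉ Sum.inl '' E := by
      rintro ⟨b', hb', heq⟩
      injection heq with heq
      exact hb (heq ▸ hb')
    exact (P.ltAttacks_image_singleton_iff E b).mp (hst (Sum.inl b) ⟨b, rfl⟩ this)

lemma preferred_iff (E : Set Arg) :
    P.Preferred E ↔ P.toABAPlus.LtPreferred (Sum.inl '' E) := by
  constructor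
  · rintro ⟨hadm, hmax⟩
    refine ⟨(P.admissible_iff E).mp hadm, ?_⟩
    intro E' hE' hsub
    have hE'Z : Sum.inl '' (Sum.inl ⁻¹' E') = E' :=
      Set.image_preimage_eq_of_subset hE'.1
    rw [← hE'Z] at hE' hsub ⊢
    have hZ : P.Admissible (Sum.inl ⁻¹' E') := (P.admissible_iff _).mpr hE'
    have hEZ : E ⊆ Sum.inl ⁻¹' E' :=
      (Set.image_subset_image_iff Sum.inl_injective).mp hsub
    rw [hmax _ hZ hEZ]
  · rintro ⟨hadm, hmax⟩
    refine ⟨(P.admissible_iff E).mpr hadm, ?_⟩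
    intro E' hE' hsub
    have := hmax (Sum.inl '' E') ((P.admissible_iff E').mp hE')
      (Set.image_mono hsub)
    exact Set.image_injective.mpr Sum.inl_injective this

lemma ideal_iff (E : Set Arg) :
    P.Ideal E ↔ P.toABAPlus.LtIdeal (Sum.inl '' E) := by
  have key : ∀ X : Set Arg,
      (P.Admissible X ∧ ∀ Q, P.Preferred Q → X ⊆ Q) ↔
      (P.toABAPlus.LtAdmissible (Sum.inl '' X) ∧
        ∀ Pr, P.toABAPlus.LtPreferred Pr → Sum.inl '' X ⊆ Pr) := by
    intro X
    constructor
    · rintro ⟨hadm, hlow⟩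
      refine ⟨(P.admissible_iff X).mp hadm, ?_⟩
      intro Pr hPr
      have hPrZ : Sum.inl '' (Sum.inl ⁻¹' Pr) = Pr :=
        Set.image_preimage_eq_of_subset hPr.1.1
      rw [← hPrZ] at hPr ⊢
      exact Set.image_mono (hlow _ ((P.preferred_iff _).mpr hPr))
    · rintro ⟨hadm, hlow⟩
      refine ⟨(P.admissible_iff X).mpr hadm, ?_⟩
      intro Q hQ
      have := hlow (Sum.inl '' Q) ((P.preferred_iff Q).mp hQ)
      exact (Set.image_subset_image_iff Sum.inl_injective).mp this
  constructor
  · rintro ⟨hE, hmax⟩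
    refine ⟨(key E).mp hE, ?_⟩
    intro E' hE' hsub
    have hE'Z : Sum.inl '' (Sum.inl ⁻¹' E') = E' :=
      Set.image_preimage_eq_of_subset hE'.1.1
    rw [← hE'Z] at hE' hsub ⊢
    have h1 := (key _).mpr hE'
    have h2 : E ⊆ Sum.inl ⁻¹' E' :=
      (Set.image_subset_image_iff Sum.inl_injective).mp hsub
    rw [hmax _ h1 h2]
  · rintro ⟨hE, hmax⟩
    refine ⟨(key E).mpr hE, ?_⟩
    intro E' hE' hsub
    have := hmax (Sum.inl '' E') ((key E').mp hE') (Set.image_mono hsub)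
    exact Set.image_injective.mpr Sum.inl_injective this

lemma fundamental {E : Set Arg} (hE : P.Admissible E) {a : Arg}
    (ha : P.DefendsArg E a) : P.Admissible (insert a E) := by
  constructor
  · rintro ⟨x, hx, y, hy, hdef⟩
    rcases hx with rfl | hx
    · rcases hy with rfl | hy
      · -- Defeat x x
        obtain ⟨c, hc, hdc⟩ := ha _ hdef
        obtain ⟨d, hd, hdd⟩ := ha c hdc
        exact hE.1 ⟨d, hd, c, hc, hdd⟩
      · -- Defeat x y, y ∈ E
        obtain ⟨c, hc, hdc⟩ := hE.2 y hy _ hdef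
        obtain ⟨d, hd, hdd⟩ := ha c hdc
        exact hE.1 ⟨d, hd, c, hc, hdd⟩
    · rcases hy with rfl | hy
      · -- Defeat x y with x ∈ E, y = a
        obtain ⟨c, hc, hdc⟩ := ha _ hdef
        exact hE.1 ⟨c, hc, x, hx, hdc⟩
      · exact hE.1 ⟨x, hx, y, hy, hdef⟩
  · intro z hz
    rcases hz with rfl | hz
    · exact P.defendsArg_mono (Set.subset_insert _ _) ha
    · exact P.defendsArg_mono (Set.subset_insert _ _) (hE.2 z hz)

lemma exists_complete : ∃ E : Set Arg, P.Complete E := by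
  obtain ⟨M, hM⟩ := zorn_subset_nonempty {E : Set Arg | P.Admissible E}
    (fun c hc hchain hne => by
      refine ⟨⋃₀ c, ⟨?_, ?_⟩, fun s hs => Set.subset_sUnion_of_mem hs⟩
      · rintro ⟨x, hx, y, hy, hdef⟩
        obtain ⟨s, hs, hxs⟩ := hx
        obtain ⟨t, ht, hyt⟩ := hy
        rcases hchain.total hs ht with h | h
        · exact (hc ht).1 ⟨x, h hxs, y, hyt, hdef⟩
        · exact (hc hs).1 ⟨x, hxs, y, h hyt, hdef⟩
      · rintro z ⟨s, hs, hzs⟩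
        exact P.defendsArg_mono (Set.subset_sUnion_of_mem hs) ((hc hs).2 z hzs))
    ∅ ⟨(by rintro ⟨x, hx, _⟩; exact hx), (by rintro z hz; exact absurd hz (by simp))⟩
  refine ⟨M, hM.2.prop, ?_⟩
  intro a hdef
  have h1 : P.Admissible (insert a M) := P.fundamental hM.2.prop hdef
  have h2 : insert a M = M := hM.2.eq_of_ge h1 (Set.subset_insert _ _)
  exact h2 ▸ Set.mem_insert _ _

lemma grounded_iff (E : Set Arg) :
    P.Grounded E ↔ P.toABAPlus.LtWellFounded (Sum.inl '' E) := by
  have key : ⋂₀ {E' | P.toABAPlus.LtComplete E'} =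
      Sum.inl '' ⋂₀ {E : Set Arg | P.Complete E} := by
    ext x
    constructor
    · intro hx
      obtain ⟨E₀, hE₀⟩ := P.exists_complete
      have hx0 : x ∈ Sum.inl '' E₀ :=
        hx (Sum.inl '' E₀) ((P.complete_iff E₀).mp hE₀)
      obtain ⟨a, _, rfl⟩ := hx0
      refine ⟨a, ?_, rfl⟩
      intro F hF
      have := hx (Sum.inl '' F) ((P.complete_iff F).mp hF)
      obtain ⟨a', ha', heq⟩ := this
      injection heq with heq
      exact heq ▸ ha'
    · rintro ⟨a, ha, rfl⟩ E' hE'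
      have hE'Z : Sum.inl '' (Sum.inl ⁻¹' E') = E' :=
        Set.image_preimage_eq_of_subset hE'.1.1
      rw [← hE'Z] at hE' ⊢
      exact Set.mem_image_of_mem _ (ha _ ((P.complete_iff _).mpr hE'))
  unfold PAF.Grounded ABAPlus.LtWellFounded
  rw [key]
  constructor
  · rintro rfl; rfl
  · intro h
    exact Set.image_injective.mpr Sum.inl_injective h

end Aux

end PAF

/-- every PAF is an instance of ABA⁺: defeat in the repaired framework
corresponds exactly to <-attack between singletons in the corresponding ABA⁺ framework,
and `E` is a σ extension of the PAF iff `Sum.inl '' E` is a <-σ extension of the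
corresponding ABA⁺ framework, for σ among grounded, ideal, stable, preferred and
complete semantics. -/
theorem PAF.instance_of_ABAPlus {Arg : Type u} [Nonempty Arg] (P : PAF Arg) :
    (∀ a b : Arg,
      P.Defeat a b ↔ P.toABAPlus.LtAttacks {Sum.inl a} {Sum.inl b}) ∧
    (∀ E : Set Arg,
      (P.Grounded E ↔ P.toABAPlus.LtWellFounded (Sum.inl '' E)) ∧
      (P.Ideal E ↔ P.toABAPlus.LtIdeal (Sum.inl '' E)) ∧
      (P.Stable E ↔ P.toABAPlus.LtStable (Sum.inl '' E)) ∧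
      (P.Preferred E ↔ P.toABAPlus.LtPreferred (Sum.inl '' E)) ∧
      (P.Complete E ↔ P.toABAPlus.LtComplete (Sum.inl '' E))) := by
  refine ⟨P.defeat_iff_ltAttacks, fun E => ⟨P.grounded_iff E, P.ideal_iff E,
    P.stable_iff E, P.preferred_iff E, P.complete_iff E⟩⟩
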